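/- arXiv:2411.06369 — 4 statements merged into one kernel-verified Lean document; each statement's English description precedes it below -/
import Mathlib

section
/- Let n ≥ 1, let ω ∈ ℝ^n, and let A : ℝ^n → ℝ^n be continuous with compact support. Define W : ℝ^n → ℂ by W(x) = exp( i · ∫_{(0,∞)} ⟨A(x + s·ω), ω⟩ ds ). Then for every x ∈ ℝ^n and every t₀ ∈ ℝ, the function t ↦ W(x + t·ω) is differentiable at t₀ with derivative −i·⟨A(x + t₀·ω), ω⟩·W(x + t₀·ω). In particular, W satisfies the transport equation ω·∇W + i(ω·A)W = 0 along every line in direction ω. -/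
open MeasureTheory

/-- The amplitude factor `W` of the geometric optics solutions solves the transport
equation `ω·∇W + i(ω·A)W = 0` along every line in direction `ω`. -/
theorem amplitude_transport_equation
    (n : ℕ) (hn : 1 ≤ n) (ω : EuclideanSpace ℝ (Fin n))
    (A : EuclideanSpace ℝ (Fin n) → EuclideanSpace ℝ (Fin n))
    (hA : Continuous A) (hsupp : HasCompactSupport A)
    (W : EuclideanSpace ℝ (Fin n) → ℂ)
    (hW : ∀ x, W x = Complex.exp
      (Complex.I * ((∫ s in Set.Ioi (0 : ℝ), (inner ℝ (A (x + s • ω)) ω : ℝ) : ℝ) : ℂ))) :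
    ∀ (x : EuclideanSpace ℝ (Fin n)) (t₀ : ℝ),
      HasDerivAt (fun t : ℝ => W (x + t • ω))
        (-Complex.I * ((inner ℝ (A (x + t₀ • ω)) ω : ℝ) : ℂ) * W (x + t₀ • ω)) t₀ := by
  intro x t₀
  set f : ℝ → ℝ := fun s => (inner ℝ (A (x + s • ω)) ω : ℝ) with hf_def
  have hf_cont : Continuous f := by
    apply Continuous.inner (hA.comp (by continuity)) continuous_const
  -- compact support of f
  have hcs : HasCompactSupport f := by
    by_cases hω : ω = 0
    · have : f = 0 := by
        funext s; simp [hf_def, hω]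
      rw [this]; exact HasCompactSupport.zero
    · obtain ⟨R, hR⟩ := hsupp.isCompact.isBounded.subset_closedBall 0
      have hωn : 0 < ‖ω‖ := norm_pos_iff.mpr hω
      set M : ℝ := (R + ‖x‖) / ‖ω‖
      apply HasCompactSupport.intro (isCompact_Icc (a := -M) (b := M))
      intro s hs
      have hsM : M < |s| := by
        simp only [Set.mem_Icc, not_and_or, not_le] at hs
        rcases hs with h | h
        · calc M < -s := by linarith
            _ ≤ |s| := neg_le_abs s
        · exact lt_of_lt_of_le h (le_abs_self s)
      have hnorm : R < ‖x + s • ω‖ := by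
        have h1 : |s| * ‖ω‖ - ‖x‖ ≤ ‖x + s • ω‖ := by
          have := norm_sub_norm_le (s • ω) (-x)
          simp only [norm_neg, norm_smul, Real.norm_eq_abs, sub_neg_eq_add] at this
          calc |s| * ‖ω‖ - ‖x‖ ≤ ‖s • ω + x‖ := by
                simpa [norm_smul] using this
            _ = ‖x + s • ω‖ := by rw [add_comm]
        have h2 : R + ‖x‖ < |s| * ‖ω‖ := by
          have := (div_lt_iff₀ hωn).mp hsM
          linarith
        linarith
      have hA0 : A (x + s • ω) = 0 := by
        apply image_eq_zero_of_notMem_tsupport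
        intro hmem
        have := hR hmem
        simp only [Metric.mem_closedBall, dist_zero_right] at this
        linarith
      simp [hf_def, hA0]
  have hint : Integrable f := hf_cont.integrable_of_hasCompactSupport hcs
  -- translation identity
  have htrans : ∀ t : ℝ, (∫ s in Set.Ioi (0 : ℝ), f (s + t)) = ∫ s in Set.Ioi t, f s := by
    intro t
    have hmp : MeasurePreserving (fun s : ℝ => s + t) volume volume :=
      measurePreserving_add_right volume t
    have hemb : MeasurableEmbedding (fun s : ℝ => s + t) :=
      (MeasurableEquiv.addRight t).measurableEmbedding
    have hpre : (fun s : ℝ => s + t) ⁻¹' Set.Ioi t = Set.Ioi 0 := by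
      ext s; simp [Set.mem_Ioi]
    calc (∫ s in Set.Ioi (0 : ℝ), f (s + t))
        = ∫ s in (fun s : ℝ => s + t) ⁻¹' Set.Ioi t, f (s + t) := by rw [hpre]
      _ = ∫ s in Set.Ioi t, f s := hmp.setIntegral_preimage_emb hemb f _
  -- F
  set F : ℝ → ℝ := fun t => ∫ s in Set.Ioi t, f s with hF_def
  have hG : HasDerivAt (fun t => ∫ s in Set.Iic t, f s) (f t₀) t₀ := by
    have key : ∀ t : ℝ, (∫ s in Set.Iic t, f s)
        = (∫ s in Set.Iic (0:ℝ), f s) + ∫ s in (0:ℝ)..t, f s := by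
      intro t
      rw [← intervalIntegral.integral_Iic_sub_Iic hint.integrableOn hint.integrableOn]
      ring
    have hd : HasDerivAt (fun t => (∫ s in Set.Iic (0:ℝ), f s) + ∫ s in (0:ℝ)..t, f s)
        (f t₀) t₀ := by
      have := intervalIntegral.integral_hasDerivAt_right (a := (0:ℝ))
        hint.intervalIntegrable
        (hf_cont.stronglyMeasurableAtFilter volume (nhds t₀))
        hf_cont.continuousAt
      simpa using (this.const_add (∫ s in Set.Iic (0:ℝ), f s))
    exact hd.congr_of_eventuallyEq (Filter.Eventually.of_forall key)
  have hF : HasDerivAt F (-(f t₀)) t₀ := by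
    have key : ∀ t : ℝ, F t = (∫ s, f s) - ∫ s in Set.Iic t, f s := by
      intro t
      rw [← intervalIntegral.integral_Iic_add_Ioi hint.integrableOn hint.integrableOn]
      ring
    have hd : HasDerivAt (fun t => (∫ s, f s) - ∫ s in Set.Iic t, f s) (-(f t₀)) t₀ := by
      simpa using (hG.const_sub _)
    exact hd.congr_of_eventuallyEq (Filter.Eventually.of_forall key)
  -- W along the line
  have hWeq : ∀ t : ℝ, W (x + t • ω) = Complex.exp (Complex.I * (F t : ℂ)) := by
    intro t
    rw [hW]
    congr 2
    have harg : ∀ s : ℝ, (x + t • ω) + s • ω = x + (s + t) • ω := by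
      intro s
      rw [add_smul]
      abel
    push_cast
    rw [show (∫ s in Set.Ioi (0:ℝ), (inner ℝ (A ((x + t • ω) + s • ω)) ω : ℝ))
        = ∫ s in Set.Ioi (0:ℝ), f (s + t) from by
      congr 1; funext s; rw [harg s]]
    rw [htrans]
  have hexp : HasDerivAt (fun t => Complex.exp (Complex.I * (F t : ℂ)))
      (Complex.I * (-(f t₀) : ℝ) * Complex.exp (Complex.I * (F t₀ : ℂ))) t₀ := by
    have h1 : HasDerivAt (fun t => (F t : ℂ)) ((-(f t₀) : ℝ) : ℂ) t₀ := hF.ofReal_comp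
    have h2 : HasDerivAt (fun t => Complex.I * (F t : ℂ))
        (Complex.I * ((-(f t₀) : ℝ) : ℂ)) t₀ := h1.const_mul _
    simpa [mul_comm] using h2.cexp
  have : HasDerivAt (fun t : ℝ => W (x + t • ω))
      (Complex.I * (-(f t₀) : ℝ) * Complex.exp (Complex.I * (F t₀ : ℂ))) t₀ :=
    hexp.congr_of_eventuallyEq (Filter.Eventually.of_forall hWeq)
  rw [hWeq t₀]
  convert this using 1
  push_cast
  ring
end

section
/- Let n ≥ 1, m ≥ 1, let ω₀ ∈ ℝ^n with ω₀ ≠ 0, and let ω : {1,…,m} → ℝ^n with ω_ℓ ≠ 0 for every ℓ. Assume that ‖ω₁‖² = Σ_{ℓ=2}^m ‖ω_ℓ‖² + ‖ω₀‖². Then for every subset S ⊆ {1,…,m}, if Σ_{ℓ∈S} ‖ω_ℓ‖² = Σ_{ℓ∉S} ‖ω_ℓ‖² + ‖ω₀‖², then S = {1}. -/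
/-- Non-resonance lemma for the phases in the recovery of `B_{1(m-1)}`:
if `‖ω₁‖² = Σ_{ℓ=2}^m ‖ω_ℓ‖² + ‖ω₀‖²`, then the only subset `S` of `{1,…,m}` with
`Σ_{ℓ∈S} ‖ω_ℓ‖² = Σ_{ℓ∉S} ‖ω_ℓ‖² + ‖ω₀‖²` is `S = {1}`. -/
theorem nonresonance_B1m
    (n m : ℕ) (hn : 1 ≤ n) (hm : 1 ≤ m)
    (ω₀ : EuclideanSpace ℝ (Fin n)) (hω₀ : ω₀ ≠ 0)
    (ω : Fin m → EuclideanSpace ℝ (Fin n)) (hω : ∀ ℓ, ω ℓ ≠ 0)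
    (h1 : ‖ω ⟨0, hm⟩‖ ^ 2
      = (∑ ℓ ∈ Finset.univ.erase ⟨0, hm⟩, ‖ω ℓ‖ ^ 2) + ‖ω₀‖ ^ 2) :
    ∀ S : Finset (Fin m),
      (∑ ℓ ∈ S, ‖ω ℓ‖ ^ 2) = (∑ ℓ ∈ Sᶜ, ‖ω ℓ‖ ^ 2) + ‖ω₀‖ ^ 2 →
      S = {⟨0, hm⟩} := by
  intro S hS
  set i0 : Fin m := ⟨0, hm⟩ with hi0
  have hf : ∀ ℓ : Fin m, 0 < ‖ω ℓ‖ ^ 2 := fun ℓ => by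
    have := norm_pos_iff.mpr (hω ℓ); positivity
  have hc : 0 < ‖ω₀‖ ^ 2 := by
    have := norm_pos_iff.mpr hω₀; positivity
  have htot : (∑ ℓ ∈ S, ‖ω ℓ‖ ^ 2) + ∑ ℓ ∈ Sᶜ, ‖ω ℓ‖ ^ 2
      = ∑ ℓ : Fin m, ‖ω ℓ‖ ^ 2 := Finset.sum_add_sum_compl S _
  have huniv : (∑ ℓ : Fin m, ‖ω ℓ‖ ^ 2)
      = ‖ω i0‖ ^ 2 + ∑ ℓ ∈ Finset.univ.erase i0, ‖ω ℓ‖ ^ 2 :=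
    (Finset.add_sum_erase _ _ (Finset.mem_univ i0)).symm
  -- deduce ∑ S = ‖ω i0‖²
  have hSval : (∑ ℓ ∈ S, ‖ω ℓ‖ ^ 2) = ‖ω i0‖ ^ 2 := by
    have := hS
    rw [huniv, h1] at htot
    linarith
  by_cases hmem : i0 ∈ S
  · have herase : (∑ ℓ ∈ S.erase i0, ‖ω ℓ‖ ^ 2) = 0 := by
      have h := Finset.add_sum_erase S (fun ℓ => ‖ω ℓ‖ ^ 2) hmem
      linarith [hSval]
    have hempty : S.erase i0 = ∅ := by
      by_contra h
      obtain ⟨x, hx⟩ := Finset.nonempty_iff_ne_empty.mpr h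
      have hle : (0:ℝ) < ∑ ℓ ∈ S.erase i0, ‖ω ℓ‖ ^ 2 :=
        Finset.sum_pos (fun ℓ _ => hf ℓ) ⟨x, hx⟩
      linarith
    have : S ⊆ {i0} := by
      intro x hx
      rcases eq_or_ne x i0 with rfl | hne
      · simp
      · exact absurd (Finset.mem_erase.mpr ⟨hne, hx⟩) (by simp [hempty])
    exact Finset.Subset.antisymm this (Finset.singleton_subset_iff.mpr hmem)
  · exfalso
    have hsub : S ⊆ Finset.univ.erase i0 := fun x hx =>
      Finset.mem_erase.mpr ⟨fun h => hmem (h ▸ hx), Finset.mem_univ x⟩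
    have hle : (∑ ℓ ∈ S, ‖ω ℓ‖ ^ 2) ≤ ∑ ℓ ∈ Finset.univ.erase i0, ‖ω ℓ‖ ^ 2 :=
      Finset.sum_le_sum_of_subset_of_nonneg hsub (fun ℓ _ _ => (hf ℓ).le)
    linarith [hSval, h1]
end

section
/- For every n ≥ 2 and every m ≥ 2 there exist vectors ω₀, ω₁, …, ω_m ∈ ℝ^n, all nonzero, such that ω₁ = ω₂ + ⋯ + ω_m + ω₀ and ‖ω₁‖² = ‖ω₂‖² + ⋯ + ‖ω_m‖² + ‖ω₀‖². -/
open scoped RealInnerProductSpace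

lemma norm_combo_sq {n : ℕ} (i j : Fin n) (hij : i ≠ j) (a b : ℝ) :
    ‖a • (EuclideanSpace.single i (1:ℝ)) + b • (EuclideanSpace.single j (1:ℝ))‖ ^ 2
      = a ^ 2 + b ^ 2 := by
  have horth : ⟪a • (EuclideanSpace.single i (1:ℝ)),
      b • (EuclideanSpace.single j (1:ℝ))⟫ = 0 := by
    rw [real_inner_smul_left, real_inner_smul_right, EuclideanSpace.inner_single_left]
    simp [EuclideanSpace.single_apply, hij]
  have h := norm_add_sq_real (a • (EuclideanSpace.single i (1:ℝ)))
      (b • (EuclideanSpace.single j (1:ℝ)))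
  rw [horth] at h
  simp [h, norm_smul, EuclideanSpace.norm_single, mul_pow, sq_abs]

/-- Existence of nonzero frequency vectors `ω₀, ω₁, …, ω_m` with
`ω₁ = ω₂ + ⋯ + ω_m + ω₀` and `‖ω₁‖² = ‖ω₂‖² + ⋯ + ‖ω_m‖² + ‖ω₀‖²`. -/
theorem exists_resonant_frequencies
    (n m : ℕ) (hn : 2 ≤ n) (hm : 2 ≤ m) :
    ∃ ω : ℕ → EuclideanSpace ℝ (Fin n),
      (∀ ℓ ≤ m, ω ℓ ≠ 0) ∧
      ω 1 = (∑ ℓ ∈ Finset.Icc 2 m, ω ℓ) + ω 0 ∧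
      ‖ω 1‖ ^ 2 = (∑ ℓ ∈ Finset.Icc 2 m, ‖ω ℓ‖ ^ 2) + ‖ω 0‖ ^ 2 := by
  set i0 : Fin n := ⟨0, by omega⟩
  set i1 : Fin n := ⟨1, by omega⟩
  have hij : i0 ≠ i1 := by simp [i0, i1, Fin.ext_iff]
  set e0 : EuclideanSpace ℝ (Fin n) := EuclideanSpace.single i0 (1:ℝ)
  set e1 : EuclideanSpace ℝ (Fin n) := EuclideanSpace.single i1 (1:ℝ)
  have hm1 : ((m + 1 - 2 : ℕ) : ℝ) = (m:ℝ) - 1 := by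
    have h : m + 1 - 2 = m - 1 := by omega
    rw [h, Nat.cast_sub (by omega), Nat.cast_one]
  refine ⟨fun ℓ => if ℓ = 0 then ((2 - (m:ℝ))/2) • e0 + (1:ℝ) • e1
      else if ℓ = 1 then ((m:ℝ)/2) • e0 + (1:ℝ) • e1 else (1:ℝ) • e0, ?_, ?_, ?_⟩
  · intro ℓ hℓ
    have key : ∀ a b : ℝ, a ^ 2 + b ^ 2 ≠ 0 → a • e0 + b • e1 ≠ 0 := by
      intro a b hab h
      apply hab
      have hk := norm_combo_sq i0 i1 hij a b
      rw [h] at hk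
      simpa using hk.symm
    rcases Nat.lt_or_ge ℓ 2 with h2 | h2
    · interval_cases ℓ <;> simp only [if_true, if_false, reduceIte] <;>
        · apply key; positivity
    · have h0 : ℓ ≠ 0 := by omega
      have h1 : ℓ ≠ 1 := by omega
      simp only [h0, h1, if_false]
      have := key 1 0 (by norm_num)
      simpa using this
  · have hsum : (∑ ℓ ∈ Finset.Icc 2 m, (if ℓ = 0 then ((2 - (m:ℝ))/2) • e0 + (1:ℝ) • e1
        else if ℓ = 1 then ((m:ℝ)/2) • e0 + (1:ℝ) • e1 else (1:ℝ) • e0))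
        = ((m:ℝ) - 1) • e0 := by
      have hconst : ∀ ℓ ∈ Finset.Icc 2 m, (if ℓ = 0 then ((2 - (m:ℝ))/2) • e0 + (1:ℝ) • e1
          else if ℓ = 1 then ((m:ℝ)/2) • e0 + (1:ℝ) • e1 else (1:ℝ) • e0) = e0 := by
        intro ℓ hℓ
        simp only [Finset.mem_Icc] at hℓ
        have h0 : ℓ ≠ 0 := by omega
        have h1 : ℓ ≠ 1 := by omega
        simp [h0, h1]
      rw [Finset.sum_congr rfl hconst, Finset.sum_const, Nat.card_Icc,
        ← Nat.cast_smul_eq_nsmul ℝ, hm1]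
    simp only [if_false, if_true, one_ne_zero, reduceIte]
    rw [hsum]
    match_scalars <;> ring
  · have hnorm2 : ∀ ℓ ∈ Finset.Icc 2 m,
        ‖(if ℓ = 0 then ((2 - (m:ℝ))/2) • e0 + (1:ℝ) • e1
        else if ℓ = 1 then ((m:ℝ)/2) • e0 + (1:ℝ) • e1 else (1:ℝ) • e0)‖ ^ 2 = 1 := by
      intro ℓ hℓ
      simp only [Finset.mem_Icc] at hℓ
      have h0 : ℓ ≠ 0 := by omega
      have h1 : ℓ ≠ 1 := by omega
      simp [h0, h1, e0, norm_smul]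
    rw [Finset.sum_congr rfl hnorm2, Finset.sum_const, Nat.card_Icc]
    simp only [if_false, if_true, one_ne_zero, reduceIte, nsmul_eq_mul, mul_one]
    rw [norm_combo_sq i0 i1 hij, norm_combo_sq i0 i1 hij, hm1]
    ring
end

section
/- Let n ≥ 2 and let 2 ≤ b < m be integers. Let e₁ and e₂ be the first two standard basis vectors of ℝ^n, and set λ = √( b(b−1) / ((m−b) + (m−b)²) ). Define ω₁ = −(b−1)·e₁, ω_ℓ = e₁ for 2 ≤ ℓ ≤ b, ω_ℓ = λ·e₂ for b+1 ≤ ℓ ≤ m, and ω₀ = (b−m)·λ·e₂. Then: (i) Σ_{ℓ=1}^b ω_ℓ = Σ_{ℓ=b+1}^m ω_ℓ + ω₀; (ii) Σ_{ℓ=1}^b ‖ω_ℓ‖² = Σ_{ℓ=b+1}^m ‖ω_ℓ‖² + ‖ω₀‖²; (iii) ω_ℓ ≠ 0 for every 0 ≤ ℓ ≤ m. -/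
/-- The explicit frequency vectors used to recover `B_{b(m-b)}` satisfy the resonance
conditions (i), (ii), and are all nonzero (iii). -/
theorem explicit_frequencies_resonant
    (n : ℕ) (hn : 2 ≤ n) (b m : ℕ) (hb : 2 ≤ b) (hbm : b < m)
    (e₁ e₂ : EuclideanSpace ℝ (Fin n))
    (he₁ : e₁ = EuclideanSpace.single ⟨0, by omega⟩ 1)
    (he₂ : e₂ = EuclideanSpace.single ⟨1, by omega⟩ 1)
    (lam : ℝ)
    (hlam : lam = Real.sqrt (((b : ℝ) * ((b : ℝ) - 1))
      / (((m : ℝ) - (b : ℝ)) + ((m : ℝ) - (b : ℝ)) ^ 2)))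
    (ω : ℕ → EuclideanSpace ℝ (Fin n))
    (hω1 : ω 1 = (-((b : ℝ) - 1)) • e₁)
    (hωmid : ∀ ℓ, 2 ≤ ℓ → ℓ ≤ b → ω ℓ = e₁)
    (hωtail : ∀ ℓ, b + 1 ≤ ℓ → ℓ ≤ m → ω ℓ = lam • e₂)
    (hω0 : ω 0 = (((b : ℝ) - (m : ℝ)) * lam) • e₂) :
    (∑ ℓ ∈ Finset.Icc 1 b, ω ℓ) = (∑ ℓ ∈ Finset.Icc (b + 1) m, ω ℓ) + ω 0 ∧
    (∑ ℓ ∈ Finset.Icc 1 b, ‖ω ℓ‖ ^ 2)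
      = (∑ ℓ ∈ Finset.Icc (b + 1) m, ‖ω ℓ‖ ^ 2) + ‖ω 0‖ ^ 2 ∧
    (∀ ℓ ≤ m, ω ℓ ≠ 0) := by
  have hb1 : (1:ℝ) ≤ (b:ℝ) := by exact_mod_cast Nat.one_le_of_lt hb
  have hbR : (2:ℝ) ≤ (b:ℝ) := by exact_mod_cast hb
  have hmb : (b:ℝ) < (m:ℝ) := by exact_mod_cast hbm
  have hden : (0:ℝ) < ((m:ℝ) - (b:ℝ)) + ((m:ℝ) - (b:ℝ))^2 := by nlinarith
  have hnum : (0:ℝ) < (b:ℝ) * ((b:ℝ) - 1) := by nlinarith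
  have hlampos : 0 < lam := by
    rw [hlam]; exact Real.sqrt_pos.mpr (div_pos hnum hden)
  have hlamsq : lam ^ 2 * (((m:ℝ) - (b:ℝ)) + ((m:ℝ) - (b:ℝ))^2) = (b:ℝ) * ((b:ℝ) - 1) := by
    rw [hlam, Real.sq_sqrt (le_of_lt (div_pos hnum hden))]
    rw [div_mul_cancel₀ _ (ne_of_gt hden)]
  have hne₁ : ‖e₁‖ = 1 := by rw [he₁, EuclideanSpace.norm_single]; simp
  have hne₂ : ‖e₂‖ = 1 := by rw [he₂, EuclideanSpace.norm_single]; simp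
  have he₁0 : e₁ ≠ 0 := by intro h; rw [h] at hne₁; simp at hne₁
  have he₂0 : e₂ ≠ 0 := by intro h; rw [h] at hne₂; simp at hne₂
  -- split the head sum
  have hsplit : Finset.Icc 1 b = insert 1 (Finset.Icc 2 b) := by
    ext x; simp [Finset.mem_Icc, Finset.mem_insert]; omega
  have hmidsum : ∀ (f : ℕ → EuclideanSpace ℝ (Fin n)) (c : EuclideanSpace ℝ (Fin n)),
      (∀ ℓ ∈ Finset.Icc 2 b, f ℓ = c) → ∑ ℓ ∈ Finset.Icc 2 b, f ℓ = (b - 1) • c := by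
    intro f c h
    rw [Finset.sum_congr rfl h, Finset.sum_const, Nat.card_Icc, show b + 1 - 2 = b - 1 by omega]
  have hcard1 : (Finset.Icc 2 b).card = b - 1 := by rw [Nat.card_Icc]; omega
  have hcard2 : (Finset.Icc (b+1) m).card = m - b := by rw [Nat.card_Icc]; omega
  have hcastb : ((b - 1 : ℕ) : ℝ) = (b:ℝ) - 1 := by
    rw [Nat.cast_sub (by omega)]; simp
  have hcastm : ((m - b : ℕ) : ℝ) = (m:ℝ) - (b:ℝ) := by
    rw [Nat.cast_sub (by omega)]
  have hsum1 : ∑ ℓ ∈ Finset.Icc 1 b, ω ℓ = 0 := by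
    rw [hsplit, Finset.sum_insert (by simp), hω1,
      Finset.sum_congr rfl (fun ℓ hℓ => hωmid ℓ (Finset.mem_Icc.mp hℓ).1 (Finset.mem_Icc.mp hℓ).2),
      Finset.sum_const, hcard1, ← Nat.cast_smul_eq_nsmul ℝ, hcastb, ← add_smul]
    simp
  have hsum2 : ∑ ℓ ∈ Finset.Icc (b+1) m, ω ℓ + ω 0 = 0 := by
    rw [Finset.sum_congr rfl (fun ℓ hℓ => hωtail ℓ (Finset.mem_Icc.mp hℓ).1 (Finset.mem_Icc.mp hℓ).2),
      Finset.sum_const, hcard2, ← Nat.cast_smul_eq_nsmul ℝ, hcastm, hω0, smul_smul, ← add_smul]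
    rw [show ((m:ℝ) - (b:ℝ)) * lam + ((b:ℝ) - (m:ℝ)) * lam = 0 by ring, zero_smul]
  refine ⟨by rw [hsum1, hsum2], ?_, ?_⟩
  · -- norms
    have h1 : ‖ω 1‖ ^ 2 = ((b:ℝ) - 1)^2 := by
      rw [hω1, norm_smul, hne₁, mul_one, Real.norm_eq_abs, abs_of_nonpos (by linarith), sq]
      ring
    have htailn : ∀ ℓ ∈ Finset.Icc (b+1) m, ‖ω ℓ‖ ^ 2 = lam ^ 2 := by
      intro ℓ hℓ
      rw [hωtail ℓ (Finset.mem_Icc.mp hℓ).1 (Finset.mem_Icc.mp hℓ).2, norm_smul, hne₂, mul_one,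
        Real.norm_eq_abs, sq_abs]
    have h0 : ‖ω 0‖ ^ 2 = ((m:ℝ) - (b:ℝ))^2 * lam ^ 2 := by
      rw [hω0, norm_smul, hne₂, mul_one, Real.norm_eq_abs, abs_mul,
        abs_of_pos hlampos, mul_pow, sq_abs]
      ring_nf
    have hA : ∑ ℓ ∈ Finset.Icc 1 b, ‖ω ℓ‖ ^ 2 = ((b:ℝ)-1)^2 + ((b:ℝ)-1) := by
      rw [hsplit, Finset.sum_insert (by simp), h1,
        Finset.sum_congr rfl (fun ℓ hℓ => by
          rw [hωmid ℓ (Finset.mem_Icc.mp hℓ).1 (Finset.mem_Icc.mp hℓ).2, hne₁, one_pow]),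
        Finset.sum_const, hcard1, nsmul_eq_mul, hcastb, mul_one]
    have hB : ∑ ℓ ∈ Finset.Icc (b+1) m, ‖ω ℓ‖ ^ 2 = ((m:ℝ)-(b:ℝ)) * lam ^ 2 := by
      rw [Finset.sum_congr rfl htailn, Finset.sum_const, hcard2, nsmul_eq_mul, hcastm]
    rw [hA, hB, h0]
    linear_combination -hlamsq
  · intro ℓ hℓ
    rcases Nat.eq_zero_or_pos ℓ with h0 | hpos
    · subst h0
      rw [hω0]
      exact smul_ne_zero (mul_ne_zero (by intro h; nlinarith) (ne_of_gt hlampos)) he₂0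
    · rcases eq_or_lt_of_le (show 1 ≤ ℓ from hpos) with h1 | h2
      · rw [← h1, hω1]
        refine smul_ne_zero ?_ he₁0
        intro h
        rw [neg_eq_zero, sub_eq_zero] at h
        exact absurd h.symm (by linarith)
      · rcases le_or_gt ℓ b with hleb | hgtb
        · rw [hωmid ℓ (by omega) hleb]; exact he₁0
        · rw [hωtail ℓ (by omega) hℓ]
          exact smul_ne_zero (ne_of_gt hlampos) he₂0
end
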